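/- Let K be a linear ordered field with a dense subset Q, and let f : K → K be strictly monotone (increasing). Suppose that for every x ∈ K and every ε > 0 there exists δ > 0 such that for all q ∈ Q with |x − q| < δ we have |f(x) − f(q)| < ε. Then f is continuous on K (in the order topology). -/

import Mathlib

theorem stmt_2 {K : Type*} [Field K] [LinearOrder K] [IsStrictOrderedRing K] [TopologicalSpace K] [OrderTopology K]
    (Q : Set K) (hQ : ∀ x y : K, x < y → ∃ q ∈ Q, x < q ∧ q < y)
    (f : K → K) (hmono : StrictMono f)
    (hεδ : ∀ x : K, ∀ ε : K, 0 < ε → ∃ δ : K, 0 < δ ∧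
      ∀ q ∈ Q, |x - q| < δ → |f x - f q| < ε) :
    Continuous f := by
  rw [continuous_iff_continuousAt]
  intro x
  rw [ContinuousAt, tendsto_order]
  constructor
  · intro a ha
    obtain ⟨δ, hδ, h⟩ := hεδ x (f x - a) (by linarith)
    obtain ⟨q, hqQ, hq1, hq2⟩ := hQ (x - δ) x (by linarith)
    have habs : |x - q| < δ := by
      rw [abs_lt]; constructor <;> linarith
    have := h q hqQ habs
    rw [abs_lt] at this
    have hfq : a < f q := by linarith
    filter_upwards [Ioi_mem_nhds hq2] with y hy
    exact lt_trans hfq (hmono hy)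
  · intro a ha
    obtain ⟨δ, hδ, h⟩ := hεδ x (a - f x) (by linarith)
    obtain ⟨q, hqQ, hq1, hq2⟩ := hQ x (x + δ) (by linarith)
    have habs : |x - q| < δ := by
      rw [abs_lt]; constructor <;> linarith
    have := h q hqQ habs
    rw [abs_lt] at this
    have hfq : f q < a := by linarith
    filter_upwards [Iio_mem_nhds hq1] with y hy
    exact lt_trans (hmono hy) hfq
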